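/- Let K₁ and K₂ be two proper invariant cones of an irreducible finite family of d×d real matrices. Then exactly one of the two sets K₁ ∩ K₂ and K₁ ∩ (−K₂) is a proper cone, and the other equals {0}. -/

import Mathlib

open Matrix Set

def IsProperCone {d : ℕ} (K : Set (Fin d → ℝ)) : Prop :=
  IsClosed K ∧ Convex ℝ K ∧ (∀ x ∈ K, ∀ t : ℝ, 0 ≤ t → t • x ∈ K) ∧
    K ∩ (-K) = {0} ∧ (interior K).Nonempty

def IsInvariantCone {d m : ℕ} (𝒜 : Fin m → Matrix (Fin d) (Fin d) ℝ)
    (K : Set (Fin d → ℝ)) : Prop :=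
  IsProperCone K ∧ ∀ i, ∀ x ∈ K, (𝒜 i).mulVec x ∈ K

def IsIrreducibleFamily {d m : ℕ} (𝒜 : Fin m → Matrix (Fin d) (Fin d) ℝ) : Prop :=
  ∀ V : Submodule ℝ (Fin d → ℝ), (∀ i, ∀ x ∈ V, (𝒜 i).mulVec x ∈ V) → V = ⊥ ∨ V = ⊤

section Aux

variable {d : ℕ}

lemma cone_add {K : Set (Fin d → ℝ)} (hconv : Convex ℝ K)
    (hcone : ∀ x ∈ K, ∀ t : ℝ, 0 ≤ t → t • x ∈ K)
    {x y : Fin d → ℝ} (hx : x ∈ K) (hy : y ∈ K) : x + y ∈ K := by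
  have h := hconv hx hy (by norm_num : (0:ℝ) ≤ 1/2) (by norm_num : (0:ℝ) ≤ 1/2) (by norm_num)
  have h2 := hcone _ h 2 (by norm_num)
  have : (2:ℝ) • ((1/2 : ℝ) • x + (1/2 : ℝ) • y) = x + y := by
    rw [smul_add, smul_smul, smul_smul]; norm_num
  rwa [this] at h2

lemma interior_smul_mem {K : Set (Fin d → ℝ)}
    (hcone : ∀ x ∈ K, ∀ t : ℝ, 0 ≤ t → t • x ∈ K)
    {z : Fin d → ℝ} (hz : z ∈ interior K) {t : ℝ} (ht : 0 < t) : t • z ∈ interior K := by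
  refine mem_interior.2 ⟨(fun x : Fin d → ℝ => t • x) '' interior K, ?_, ?_, ⟨z, hz, rfl⟩⟩
  · rintro _ ⟨w, hw, rfl⟩
    exact hcone _ (interior_subset hw) t ht.le
  · have : IsOpenMap (fun x : Fin d → ℝ => t • x) :=
      (Homeomorph.smulOfNeZero (t : ℝ) (ne_of_gt ht)).isOpenMap
    exact this _ isOpen_interior

lemma interior_add_mem {K : Set (Fin d → ℝ)} (hconv : Convex ℝ K)
    (hcone : ∀ x ∈ K, ∀ t : ℝ, 0 ≤ t → t • x ∈ K)
    {z w : Fin d → ℝ} (hz : z ∈ interior K) (hw : w ∈ K) : z + w ∈ interior K := by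
  refine mem_interior.2 ⟨(fun x => x + w) '' interior K, ?_, ?_, ⟨z, hz, rfl⟩⟩
  · rintro _ ⟨u, hu, rfl⟩
    exact cone_add hconv hcone (interior_subset hu) hw
  · exact (Homeomorph.addRight w).isOpenMap _ isOpen_interior

lemma zero_mem_of_cone {K : Set (Fin d → ℝ)}
    (hcone : ∀ x ∈ K, ∀ t : ℝ, 0 ≤ t → t • x ∈ K) {x : Fin d → ℝ} (hx : x ∈ K) :
    (0 : Fin d → ℝ) ∈ K := by
  simpa using hcone x hx 0 le_rfl

lemma zero_not_mem_interior {K : Set (Fin d → ℝ)} (hd : 0 < d)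
    (hpt : K ∩ (-K) = {0}) : (0 : Fin d → ℝ) ∉ interior K := by
  intro h0
  obtain ⟨ε, hε, hball⟩ := Metric.mem_nhds_iff.1 (mem_interior_iff_mem_nhds.1 h0)
  set u : Fin d → ℝ := fun _ => ε/2 with hu
  have hune : u ≠ 0 := by
    intro h
    have := congrFun h ⟨0, hd⟩
    simp [hu] at this
    linarith
  have hnu : ‖u‖ < ε := by
    rw [hu]
    have : ‖(fun _ : Fin d => ε/2)‖ ≤ ε/2 := by
      apply pi_norm_le_iff_of_nonneg (by positivity) |>.2
      intro i
      rw [Real.norm_eq_abs, abs_of_pos (half_pos hε)]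
    linarith
  have h1 : u ∈ K := hball (by simpa [Metric.mem_ball, dist_zero_right] using hnu)
  have h2 : -u ∈ K := hball (by simpa [Metric.mem_ball, dist_zero_right] using hnu)
  have : u ∈ K ∩ (-K) := ⟨h1, by simpa using h2⟩
  rw [hpt] at this
  exact hune this

variable {d m : ℕ}

lemma interior_nonempty_of_invariant
    {𝒜 : Fin m → Matrix (Fin d) (Fin d) ℝ}
    (hirr : ∀ V : Submodule ℝ (Fin d → ℝ), (∀ i, ∀ x ∈ V, (𝒜 i).mulVec x ∈ V) → V = ⊥ ∨ V = ⊤)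
    {C : Set (Fin d → ℝ)} (hconv : Convex ℝ C)
    (hcone : ∀ x ∈ C, ∀ t : ℝ, 0 ≤ t → t • x ∈ C)
    (hinv : ∀ i, ∀ x ∈ C, (𝒜 i).mulVec x ∈ C)
    (hne : ∃ x ∈ C, x ≠ 0) : (interior C).Nonempty := by
  obtain ⟨x0, hx0, hx0ne⟩ := hne
  set V : Submodule ℝ (Fin d → ℝ) := Submodule.span ℝ C with hV
  have hVinv : ∀ i, ∀ x ∈ V, (𝒜 i).mulVec x ∈ V := by
    intro i x hx
    induction hx using Submodule.span_induction with
    | mem y hy => exact Submodule.subset_span (hinv i y hy)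
    | zero => simpa [Matrix.mulVec_zero] using (Submodule.zero_mem V)
    | add y z _ _ hy hz => simpa [Matrix.mulVec_add] using Submodule.add_mem V hy hz
    | smul t y _ hy => simpa [Matrix.mulVec_smul] using Submodule.smul_mem V t hy
  rcases hirr V hVinv with hbot | htop
  · exfalso
    have : x0 ∈ V := Submodule.subset_span hx0
    rw [hbot] at this
    exact hx0ne (by simpa using this)
  · have h0 : (0 : Fin d → ℝ) ∈ C := by simpa using hcone x0 hx0 0 le_rfl
    have hvs : vectorSpan ℝ C = ⊤ := by
      rw [vectorSpan_eq_span_vsub_set_right ℝ h0]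
      have : (· -ᵥ (0 : Fin d → ℝ)) '' C = C := by
        ext y; simp [vsub_eq_sub]
      rw [this]; exact htop
    have haff : affineSpan ℝ C = ⊤ :=
      (AffineSubspace.affineSpan_eq_top_iff_vectorSpan_eq_top_of_nonempty ℝ (Fin d → ℝ) (Fin d → ℝ) ⟨0, h0⟩).2 hvs
    exact (hconv.interior_nonempty_iff_affineSpan_eq_top).2 haff

/-- normality: for a closed pointed cone, `‖a‖ ≤ c * ‖a + b‖` for `a, b ∈ K`. -/
lemma cone_normality {K : Set (Fin d → ℝ)} (hcl : IsClosed K)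
    (hcone : ∀ x ∈ K, ∀ t : ℝ, 0 ≤ t → t • x ∈ K)
    (hpt : K ∩ (-K) = {0}) :
    ∃ c : ℝ, 0 < c ∧ ∀ a ∈ K, ∀ b ∈ K, ‖a‖ ≤ c * ‖a + b‖ := by
  by_contra hcon
  push_neg at hcon
  have key : ∀ n : ℕ, ∃ a ∈ K, ∃ b ∈ K, ‖a‖ = 1 ∧ ‖b‖ ≤ 2 ∧ ‖a + b‖ < 1 / (n + 1) := by
    intro n
    obtain ⟨a, ha, b, hb, hab⟩ := hcon (n + 1) (by positivity)
    have hapos : 0 < ‖a‖ := lt_of_le_of_lt (by positivity) hab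
    refine ⟨‖a‖⁻¹ • a, hcone a ha _ (by positivity), ‖a‖⁻¹ • b, hcone b hb _ (by positivity),
      ?_, ?_, ?_⟩
    · simp [norm_smul, abs_of_pos (inv_pos.2 hapos), inv_mul_cancel₀ (ne_of_gt hapos)]
    ·
      have h1 : ‖b‖ ≤ ‖a + b‖ + ‖a‖ := by
        calc ‖b‖ = ‖(a + b) - a‖ := by ring_nf
        _ ≤ ‖a + b‖ + ‖a‖ := norm_sub_le _ _
      have h2 : ‖a + b‖ ≤ ‖a‖ := by
        nlinarith [hab, hapos]
      rw [norm_smul, Real.norm_eq_abs, abs_of_pos (inv_pos.2 hapos)]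
      calc ‖a‖⁻¹ * ‖b‖ ≤ ‖a‖⁻¹ * (2 * ‖a‖) := by
            apply mul_le_mul_of_nonneg_left _ (by positivity)
            nlinarith
        _ = 2 := by field_simp
    · rw [← smul_add, norm_smul, Real.norm_eq_abs, abs_of_pos (inv_pos.2 hapos)]
      calc ‖a‖⁻¹ * ‖a + b‖ < ‖a‖⁻¹ * (‖a‖ / (n + 1)) := by
            apply mul_lt_mul_of_pos_left _ (inv_pos.2 hapos)
            rw [lt_div_iff₀ (by positivity : (0:ℝ) < ((n:ℝ) + 1))]
            nlinarith
        _ = 1 / (n + 1) := by field_simp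
  choose a ha b hb hna hnb hnab using key
  -- compactness
  have hcompact : IsCompact ((K ∩ Metric.closedBall 0 2) ×ˢ (K ∩ Metric.closedBall 0 2)) :=
    ((isCompact_closedBall (0 : Fin d → ℝ) 2).inter_left hcl).prod
      ((isCompact_closedBall (0 : Fin d → ℝ) 2).inter_left hcl)
  have hmem : ∀ n, (a n, b n) ∈ ((K ∩ Metric.closedBall 0 2) ×ˢ (K ∩ Metric.closedBall 0 2)) := by
    intro n
    refine ⟨⟨ha n, ?_⟩, ⟨hb n, ?_⟩⟩
    · simp only [Metric.mem_closedBall, dist_zero_right, hna n]; norm_num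
    · simp [Metric.mem_closedBall, dist_zero_right]; exact hnb n
  obtain ⟨⟨A, B⟩, hAB, φ, hφ, hconv⟩ := hcompact.tendsto_subseq hmem
  have hA : A ∈ K := hAB.1.1
  have hB : B ∈ K := hAB.2.1
  have htendA : Filter.Tendsto (fun n => a (φ n)) Filter.atTop (nhds A) :=
    (continuous_fst.tendsto _).comp hconv
  have htendB : Filter.Tendsto (fun n => b (φ n)) Filter.atTop (nhds B) :=
    (continuous_snd.tendsto _).comp hconv
  have hsum : A + B = 0 := by
    have h1 : Filter.Tendsto (fun n => a (φ n) + b (φ n)) Filter.atTop (nhds (A + B)) :=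
      htendA.add htendB
    have h2 : Filter.Tendsto (fun n => a (φ n) + b (φ n)) Filter.atTop (nhds 0) := by
      rw [tendsto_zero_iff_norm_tendsto_zero]
      apply squeeze_zero (fun n => norm_nonneg _) (fun n => (hnab (φ n)).le)
      have : Filter.Tendsto (fun n : ℕ => 1 / ((n : ℝ) + 1)) Filter.atTop (nhds 0) :=
        tendsto_one_div_add_atTop_nhds_zero_nat
      exact this.comp (hφ.tendsto_atTop)
    exact tendsto_nhds_unique h1 h2
  have hnA : ‖A‖ = 1 := by
    have : Filter.Tendsto (fun n => ‖a (φ n)‖) Filter.atTop (nhds ‖A‖) := htendA.norm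
    have h2 : Filter.Tendsto (fun n => ‖a (φ n)‖) Filter.atTop (nhds 1) := by
      simpa [hna] using tendsto_const_nhds (x := (1:ℝ))
    exact tendsto_nhds_unique this h2
  have hBA : -A = B := neg_eq_of_add_eq_zero_right hsum
  have : A ∈ K ∩ (-K) := ⟨hA, by rw [Set.mem_neg, hBA]; exact hB⟩
  rw [hpt] at this
  simp only [Set.mem_singleton_iff] at this
  rw [this] at hnA
  simp at hnA

section Smachinery
variable {𝒜 : Fin m → Matrix (Fin d) (Fin d) ℝ} {K₁ K₂ : Set (Fin d → ℝ)}

/-- closed convex cone data we need -/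
def CCone (K : Set (Fin d → ℝ)) : Prop :=
  (∀ x ∈ K, ∀ t : ℝ, 0 ≤ t → t • x ∈ K) ∧ (∀ x ∈ K, ∀ y ∈ K, x + y ∈ K)

lemma ccone_of (hconv : Convex ℝ K₁) (hcone : ∀ x ∈ K₁, ∀ t : ℝ, 0 ≤ t → t • x ∈ K₁) :
    CCone K₁ := ⟨hcone, fun x hx y hy => cone_add hconv hcone hx hy⟩

/-- matrices preserving both cones -/
def Sgood (K₁ K₂ : Set (Fin d → ℝ)) : Set (Matrix (Fin d) (Fin d) ℝ) :=
  {B | (∀ x ∈ K₁, B.mulVec x ∈ K₁) ∧ (∀ x ∈ K₂, B.mulVec x ∈ K₂)}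

lemma Sgood_one : (1 : Matrix (Fin d) (Fin d) ℝ) ∈ Sgood K₁ K₂ := by
  constructor <;> intro x hx <;> simpa [Matrix.one_mulVec] using hx

lemma Sgood_add {A B : Matrix (Fin d) (Fin d) ℝ} (h₁ : CCone K₁) (h₂ : CCone K₂)
    (hA : A ∈ Sgood K₁ K₂) (hB : B ∈ Sgood K₁ K₂) : A + B ∈ Sgood K₁ K₂ := by
  constructor <;> intro x hx
  · rw [Matrix.add_mulVec]
    exact h₁.2 _ (hA.1 x hx) _ (hB.1 x hx)
  · rw [Matrix.add_mulVec]
    exact h₂.2 _ (hA.2 x hx) _ (hB.2 x hx)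

lemma Sgood_smul {A : Matrix (Fin d) (Fin d) ℝ} {t : ℝ} (ht : 0 ≤ t)
    (h₁ : CCone K₁) (h₂ : CCone K₂)
    (hA : A ∈ Sgood K₁ K₂) : t • A ∈ Sgood K₁ K₂ := by
  constructor <;> intro x hx
  · rw [Matrix.smul_mulVec]
    exact h₁.1 _ (hA.1 x hx) t ht
  · rw [Matrix.smul_mulVec]
    exact h₂.1 _ (hA.2 x hx) t ht

lemma Sgood_mul {A B : Matrix (Fin d) (Fin d) ℝ}
    (hA : A ∈ Sgood K₁ K₂) (hB : B ∈ Sgood K₁ K₂) : A * B ∈ Sgood K₁ K₂ := by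
  constructor <;> intro x hx
  · rw [← Matrix.mulVec_mulVec]
    exact hA.1 _ (hB.1 x hx)
  · rw [← Matrix.mulVec_mulVec]
    exact hA.2 _ (hB.2 x hx)

lemma Sgood_sum {ι : Type*} (t : Finset ι) (B : ι → Matrix (Fin d) (Fin d) ℝ)
    (h₁ : CCone K₁) (h₂ : CCone K₂) (hmem₁ : (0:Fin d → ℝ) ∈ K₁) (hmem₂ : (0:Fin d → ℝ) ∈ K₂)
    (hB : ∀ i ∈ t, B i ∈ Sgood K₁ K₂) : (∑ i ∈ t, B i) ∈ Sgood K₁ K₂ := by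
  classical
  induction t using Finset.induction_on with
  | empty =>
    constructor <;> intro x hx <;> simp [Matrix.zero_mulVec]
    exacts [hmem₁, hmem₂]
  | insert _ _ hni ih =>
    rw [Finset.sum_insert hni]
    exact Sgood_add h₁ h₂ (hB _ (Finset.mem_insert_self _ _))
      (ih fun i hi => hB i (Finset.mem_insert_of_mem hi))

lemma mulVec_continuous' (B : Matrix (Fin d) (Fin d) ℝ) :
    Continuous (fun x : Fin d → ℝ => B.mulVec x) :=
  LinearMap.continuous_of_finiteDimensional B.mulVecLin

/-- reach interior: any nonzero point of K₁ can be mapped into the interior of K₁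
by some B ∈ Sgood. -/
lemma reach_interior
    (hirr : ∀ V : Submodule ℝ (Fin d → ℝ), (∀ i, ∀ x ∈ V, (𝒜 i).mulVec x ∈ V) → V = ⊥ ∨ V = ⊤)
    (hcl₁ : IsClosed K₁) (hconv₁ : Convex ℝ K₁)
    (hcone₁ : ∀ x ∈ K₁, ∀ t : ℝ, 0 ≤ t → t • x ∈ K₁)
    (h₂ : CCone K₂)
    (h𝒜 : ∀ i, 𝒜 i ∈ Sgood K₁ K₂)
    {x : Fin d → ℝ} (hx : x ∈ K₁) (hxne : x ≠ 0) :
    ∃ B ∈ Sgood K₁ K₂, B.mulVec x ∈ interior K₁ := by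
  have h₁ : CCone K₁ := ccone_of hconv₁ hcone₁
  set Cx : Set (Fin d → ℝ) := {y | ∃ B ∈ Sgood K₁ K₂, y = B.mulVec x} with hCx
  have hxCx : x ∈ Cx := ⟨1, Sgood_one, by rw [Matrix.one_mulVec]⟩
  have hCxK : Cx ⊆ K₁ := by rintro y ⟨B, hB, rfl⟩; exact hB.1 x hx
  have hCxconv : Convex ℝ Cx := by
    rintro y ⟨B, hB, rfl⟩ z ⟨B', hB', rfl⟩ s t hs ht hst
    refine ⟨s • B + t • B', Sgood_add h₁ h₂ (Sgood_smul hs h₁ h₂ hB)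
      (Sgood_smul ht h₁ h₂ hB'), ?_⟩
    rw [Matrix.add_mulVec, Matrix.smul_mulVec, Matrix.smul_mulVec]
  have hCxcone : ∀ y ∈ Cx, ∀ t : ℝ, 0 ≤ t → t • y ∈ Cx := by
    rintro y ⟨B, hB, rfl⟩ t ht
    exact ⟨t • B, Sgood_smul ht h₁ h₂ hB, (Matrix.smul_mulVec t B x).symm⟩
  have hCxinv : ∀ i, ∀ y ∈ Cx, (𝒜 i).mulVec y ∈ Cx := by
    rintro i y ⟨B, hB, rfl⟩
    refine ⟨𝒜 i * B, Sgood_mul (h𝒜 i) hB, ?_⟩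
    rw [Matrix.mulVec_mulVec]
  -- pass to closure
  set D := closure Cx with hD
  have hDconv : Convex ℝ D := hCxconv.closure
  have hDcone : ∀ y ∈ D, ∀ t : ℝ, 0 ≤ t → t • y ∈ D := by
    intro y hy t ht
    have : Continuous (fun z : Fin d → ℝ => t • z) := continuous_const_smul t
    have h1 : (fun z : Fin d → ℝ => t • z) '' Cx ⊆ Cx := by
      rintro _ ⟨z, hz, rfl⟩; exact hCxcone z hz t ht
    have := (image_closure_subset_closure_image this (s := Cx)).trans (closure_mono h1)
    exact this ⟨y, hy, rfl⟩
  have hDinv : ∀ i, ∀ y ∈ D, (𝒜 i).mulVec y ∈ D := by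
    intro i y hy
    have hc : Continuous (fun z : Fin d → ℝ => (𝒜 i).mulVec z) := mulVec_continuous' _
    have h1 : (fun z : Fin d → ℝ => (𝒜 i).mulVec z) '' Cx ⊆ Cx := by
      rintro _ ⟨z, hz, rfl⟩; exact hCxinv i z hz
    have := (image_closure_subset_closure_image hc (s := Cx)).trans (closure_mono h1)
    exact this ⟨y, hy, rfl⟩
  have hDK : D ⊆ K₁ := closure_minimal hCxK hcl₁
  have hDint : (interior D).Nonempty :=
    interior_nonempty_of_invariant hirr hDconv hDcone hDinv
      ⟨x, subset_closure hxCx, hxne⟩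
  -- a point of Cx inside interior D ⊆ interior K₁
  obtain ⟨p, hp⟩ := hDint
  have hdense : (Cx ∩ interior D).Nonempty := by
    have : p ∈ closure Cx := interior_subset hp
    rcases mem_closure_iff.1 this (interior D) isOpen_interior hp with ⟨q, hq1, hq2⟩
    exact ⟨q, hq2, hq1⟩
  obtain ⟨q, hqCx, hqint⟩ := hdense
  obtain ⟨B, hB, rfl⟩ := hqCx
  exact ⟨B, hB, interior_mono hDK hqint⟩

/-- uniform positivity on K₁ -/
lemma uniform_positive
    (hirr : ∀ V : Submodule ℝ (Fin d → ℝ), (∀ i, ∀ x ∈ V, (𝒜 i).mulVec x ∈ V) → V = ⊥ ∨ V = ⊤)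
    (hcl₁ : IsClosed K₁) (hconv₁ : Convex ℝ K₁)
    (hcone₁ : ∀ x ∈ K₁, ∀ t : ℝ, 0 ≤ t → t • x ∈ K₁)
    (h₂ : CCone K₂) (hmem₁ : (0:Fin d → ℝ) ∈ K₁) (hmem₂ : (0:Fin d → ℝ) ∈ K₂)
    (h𝒜 : ∀ i, 𝒜 i ∈ Sgood K₁ K₂) :
    ∃ A ∈ Sgood K₁ K₂, ∀ x ∈ K₁, x ≠ 0 → A.mulVec x ∈ interior K₁ := by
  classical
  have h₁ : CCone K₁ := ccone_of hconv₁ hcone₁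
  set KS := K₁ ∩ Metric.sphere (0 : Fin d → ℝ) 1 with hKS
  have hKScompact : IsCompact KS := (isCompact_sphere _ _).inter_left hcl₁
  -- choose for each point of KS a matrix
  have hchoice : ∀ y : KS, ∃ B ∈ Sgood K₁ K₂, B.mulVec y.1 ∈ interior K₁ := by
    rintro ⟨y, hy, hys⟩
    have : y ≠ 0 := by
      intro h; rw [h] at hys; simp at hys
    exact reach_interior hirr hcl₁ hconv₁ hcone₁ h₂ h𝒜 hy this
  choose Bf hBf hBfint using hchoice
  -- open cover
  have hcover : KS ⊆ ⋃ y : KS, (fun z => (Bf y).mulVec z) ⁻¹' interior K₁ := by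
    intro z hz
    exact mem_iUnion.2 ⟨⟨z, hz⟩, hBfint ⟨z, hz⟩⟩
  obtain ⟨t, ht⟩ := hKScompact.elim_finite_subcover _
    (fun y : KS => (mulVec_continuous' (Bf y)).isOpen_preimage _ isOpen_interior) hcover
  refine ⟨∑ y ∈ t, Bf y, Sgood_sum t Bf h₁ h₂ hmem₁ hmem₂ (fun i _ => hBf i), ?_⟩
  intro x hxK hxne
  have hnx : 0 < ‖x‖ := norm_pos_iff.2 hxne
  have hxs : ‖x‖⁻¹ • x ∈ KS := by
    refine ⟨hcone₁ x hxK _ (by positivity), ?_⟩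
    simp [norm_smul, abs_of_pos (inv_pos.2 hnx), inv_mul_cancel₀ (ne_of_gt hnx)]
  obtain ⟨y0, hy0t, hy0⟩ := mem_iUnion₂.1 (ht hxs)
  -- (Bf y0).mulVec (‖x‖⁻¹ • x) ∈ interior K₁  ⇒ scale
  have hx' : (Bf y0).mulVec x ∈ interior K₁ := by
    have h5 := interior_smul_mem hcone₁ hy0 hnx
    simp only [Matrix.mulVec_smul] at h5
    rwa [smul_smul, mul_inv_cancel₀ (ne_of_gt hnx), one_smul] at h5
  -- sum = this term + rest
  have hsum : (∑ y ∈ t, Bf y).mulVec x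
      = (Bf y0).mulVec x + (∑ y ∈ t.erase y0, Bf y).mulVec x := by
    rw [← Matrix.add_mulVec, Finset.add_sum_erase _ _ hy0t]
  rw [hsum]
  have hrest : (∑ y ∈ t.erase y0, Bf y).mulVec x ∈ K₁ :=
    (Sgood_sum _ Bf h₁ h₂ hmem₁ hmem₂ (fun i _ => hBf i)).1 x hxK
  exact interior_add_mem hconv₁ hcone₁ hx' hrest

end Smachinery

section Eigen
variable {K : Set (Fin d → ℝ)} {T : Matrix (Fin d) (Fin d) ℝ}

lemma mulVec_norm_bound (T : Matrix (Fin d) (Fin d) ℝ) :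
    ∃ CT : ℝ, 0 < CT ∧ ∀ x : Fin d → ℝ, ‖T.mulVec x‖ ≤ CT * ‖x‖ := by
  set f := LinearMap.toContinuousLinearMap T.mulVecLin with hf
  refine ⟨‖f‖ + 1, by positivity, fun x => ?_⟩
  have h1 : ‖f x‖ ≤ ‖f‖ * ‖x‖ := f.le_opNorm x
  have h2 : f x = T.mulVec x := by
    simp [hf, LinearMap.coe_toContinuousLinearMap', Matrix.mulVecLin_apply]
  rw [← h2]
  nlinarith [norm_nonneg x, norm_nonneg (f x), ContinuousLinearMap.opNorm_nonneg f]

lemma small_shift_interior {z w : Fin d → ℝ} (hz : z ∈ interior K) :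
    ∃ ε : ℝ, 0 < ε ∧ z - ε • w ∈ interior K := by
  have hco : Continuous (fun ε : ℝ => z - ε • w) := by
    exact continuous_const.sub (continuous_id.smul continuous_const)
  have h0 : (fun ε : ℝ => z - ε • w) 0 ∈ interior K := by simpa using hz
  have hop : IsOpen ((fun ε : ℝ => z - ε • w) ⁻¹' interior K) :=
    hco.isOpen_preimage _ isOpen_interior
  obtain ⟨δ, hδ, hball⟩ := Metric.isOpen_iff.1 hop 0 h0
  refine ⟨δ/2, half_pos hδ, hball ?_⟩
  rw [Metric.mem_ball, Real.dist_eq, sub_zero, abs_of_pos (half_pos hδ)]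
  linarith

lemma exists_pos_eigenvector (hd : 0 < d)
    (hcl : IsClosed K) (hconv : Convex ℝ K)
    (hcone : ∀ x ∈ K, ∀ t : ℝ, 0 ≤ t → t • x ∈ K)
    (hpt : K ∩ (-K) = {0}) (hint : (interior K).Nonempty)
    (hTK : ∀ x ∈ K, T.mulVec x ∈ K)
    (hTpos : ∀ x ∈ K, x ≠ 0 → T.mulVec x ∈ interior K) :
    ∃ ρ : ℝ, 0 < ρ ∧ ∃ v, v ∈ interior K ∧ v ≠ 0 ∧ T.mulVec v = ρ • v := by
  obtain ⟨CT, hCTpos, hCT⟩ := mulVec_norm_bound T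
  obtain ⟨c, hcpos, hnorm⟩ := cone_normality hcl hcone hpt
  set E : Set ((Fin d → ℝ) × ℝ) :=
    {p | p.1 ∈ K ∧ ‖p.1‖ = 1 ∧ 0 ≤ p.2 ∧ T.mulVec p.1 - p.2 • p.1 ∈ K} with hE
  have hcont : Continuous (fun p : (Fin d → ℝ) × ℝ => T.mulVec p.1 - p.2 • p.1) :=
    ((mulVec_continuous' T).comp continuous_fst).sub (continuous_snd.smul continuous_fst)
  have hEclosed : IsClosed E := by
    have heq : E = ({p : (Fin d → ℝ) × ℝ | p.1 ∈ K} ∩ {p | ‖p.1‖ = 1})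
        ∩ ({p | 0 ≤ p.2} ∩ {p | T.mulVec p.1 - p.2 • p.1 ∈ K}) := by
      ext p; simp only [hE, Set.mem_setOf_eq, Set.mem_inter_iff]; tauto
    rw [heq]
    exact ((hcl.preimage continuous_fst).inter
        (isClosed_eq continuous_fst.norm continuous_const)).inter
      ((isClosed_le continuous_const continuous_snd).inter (hcl.preimage hcont))
  have hEsub : E ⊆ (Metric.sphere (0 : Fin d → ℝ) 1) ×ˢ (Set.Icc (0:ℝ) (c * CT)) := by
    rintro ⟨x, lam⟩ ⟨hxK, hx1, hlam0, hxy⟩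
    refine ⟨by simpa [Metric.mem_sphere, dist_zero_right] using hx1, hlam0, ?_⟩
    have h1 : lam • x ∈ K := hcone x hxK lam hlam0
    have h2 := hnorm _ h1 _ hxy
    have h3 : lam • x + (T.mulVec x - lam • x) = T.mulVec x := by ring_nf
    rw [h3] at h2
    have h4 : ‖lam • x‖ = lam := by
      rw [norm_smul, Real.norm_eq_abs, abs_of_nonneg hlam0, hx1, mul_one]
    have h5 : ‖T.mulVec x‖ ≤ CT := by
      have := hCT x; rwa [hx1, mul_one] at this
    calc lam = ‖lam • x‖ := h4.symm
      _ ≤ c * ‖T.mulVec x‖ := h2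
      _ ≤ c * CT := by nlinarith
  have hEcompact : IsCompact E :=
    ((isCompact_sphere _ _).prod isCompact_Icc).of_isClosed_subset hEclosed hEsub
  -- nonempty
  obtain ⟨e, he⟩ := hint
  have hene : e ≠ 0 := fun h => zero_not_mem_interior hd hpt (h ▸ he)
  have hne : 0 < ‖e‖ := norm_pos_iff.2 hene
  set xbar := ‖e‖⁻¹ • e with hxbar
  have hxbarK : xbar ∈ K := hcone e (interior_subset he) _ (by positivity)
  have hxbar1 : ‖xbar‖ = 1 := by
    rw [hxbar, norm_smul, Real.norm_eq_abs, abs_of_pos (inv_pos.2 hne),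
      inv_mul_cancel₀ (ne_of_gt hne)]
  have hEne : E.Nonempty := ⟨⟨xbar, 0⟩, hxbarK, hxbar1, le_refl 0, by
    simpa using hTK xbar hxbarK⟩
  -- maximize second coordinate
  obtain ⟨⟨x₀, ρ⟩, hpE, hmax⟩ := hEcompact.exists_isMaxOn hEne (continuous_snd.continuousOn)
  obtain ⟨hx₀K, hx₀1, hρ0, hy₀⟩ := hpE
  have hx₀ne : x₀ ≠ 0 := by intro h; rw [h] at hx₀1; simp at hx₀1
  -- ρ > 0
  have hρpos : 0 < ρ := by
    obtain ⟨ε, hε, hmem⟩ := small_shift_interior (w := x₀) (hTpos x₀ hx₀K hx₀ne)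
    have : (⟨x₀, ε⟩ : (Fin d → ℝ) × ℝ) ∈ E := ⟨hx₀K, hx₀1, hε.le, interior_subset hmem⟩
    exact lt_of_lt_of_le hε (hmax this)
  -- claim Tx₀ = ρ x₀
  set y := T.mulVec x₀ - ρ • x₀ with hy
  by_cases hyzero : y = 0
  · have heig : T.mulVec x₀ = ρ • x₀ := by
      have := sub_eq_zero.1 hyzero; exact this
    refine ⟨ρ, hρpos, x₀, ?_, hx₀ne, heig⟩
    have : ρ⁻¹ • (T.mulVec x₀) ∈ interior K :=
      interior_smul_mem hcone (hTpos x₀ hx₀K hx₀ne) (inv_pos.2 hρpos)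
    rwa [heig, smul_smul, inv_mul_cancel₀ (ne_of_gt hρpos), one_smul] at this
  · exfalso
    set z := T.mulVec x₀ with hz
    have hzint : z ∈ interior K := hTpos x₀ hx₀K hx₀ne
    have hzne : z ≠ 0 := fun h => zero_not_mem_interior hd hpt (h ▸ hzint)
    have hTy : T.mulVec y = T.mulVec z - ρ • z := by
      rw [hy, Matrix.mulVec_sub, Matrix.mulVec_smul]
    have hTyint : T.mulVec y ∈ interior K := hTpos y hy₀ hyzero
    obtain ⟨ε, hε, hmem⟩ := small_shift_interior (w := z) hTyint
    -- T z - (ρ+ε) z ∈ K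
    have hkey : T.mulVec z - (ρ + ε) • z ∈ K := by
      have : T.mulVec y - ε • z = T.mulVec z - (ρ + ε) • z := by
        rw [hTy, add_smul]; ring_nf
      rw [← this]
      exact interior_subset hmem
    have hnz : 0 < ‖z‖ := norm_pos_iff.2 hzne
    set x₁ := ‖z‖⁻¹ • z with hx₁
    have hx₁K : x₁ ∈ K := hcone z (interior_subset hzint) _ (by positivity)
    have hx₁1 : ‖x₁‖ = 1 := by
      rw [hx₁, norm_smul, Real.norm_eq_abs, abs_of_pos (inv_pos.2 hnz),
        inv_mul_cancel₀ (ne_of_gt hnz)]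
    have hx₁mem : T.mulVec x₁ - (ρ + ε) • x₁ ∈ K := by
      have : T.mulVec x₁ - (ρ + ε) • x₁ = ‖z‖⁻¹ • (T.mulVec z - (ρ + ε) • z) := by
        rw [hx₁, Matrix.mulVec_smul, smul_sub, smul_smul, smul_smul, mul_comm]
      rw [this]
      exact hcone _ hkey _ (by positivity)
    have hmm : (⟨x₁, ρ + ε⟩ : (Fin d → ℝ) × ℝ) ∈ E :=
      ⟨hx₁K, hx₁1, show (0:ℝ) ≤ ρ + ε by linarith, hx₁mem⟩
    have h9 : ρ + ε ≤ ρ := hmax hmm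
    linarith
end Eigen

section Compare
variable {K₁ K₂ : Set (Fin d → ℝ)} {T : Matrix (Fin d) (Fin d) ℝ}

lemma pow_mulVec_mem {K : Set (Fin d → ℝ)} (hTK : ∀ x ∈ K, T.mulVec x ∈ K) :
    ∀ n : ℕ, ∀ x ∈ K, (T ^ n).mulVec x ∈ K := by
  intro n
  induction n with
  | zero => intro x hx; simpa [pow_zero, Matrix.one_mulVec] using hx
  | succ k ih =>
    intro x hx
    rw [pow_succ', ← Matrix.mulVec_mulVec]
    exact hTK _ (ih x hx)

lemma pow_mulVec_eigen {v : Fin d → ℝ} {ρ : ℝ} (hv : T.mulVec v = ρ • v) :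
    ∀ n : ℕ, (T ^ n).mulVec v = ρ ^ n • v := by
  intro n
  induction n with
  | zero => simp [pow_zero, Matrix.one_mulVec]
  | succ k ih =>
    rw [pow_succ', ← Matrix.mulVec_mulVec, ih, Matrix.mulVec_smul, hv, smul_smul, pow_succ]

lemma eigenvalue_le
    (hcl₁ : IsClosed K₁)
    (hcone₁ : ∀ x ∈ K₁, ∀ t : ℝ, 0 ≤ t → t • x ∈ K₁)
    (hpt₁ : K₁ ∩ (-K₁) = {0})
    (hTK₁ : ∀ x ∈ K₁, T.mulVec x ∈ K₁)
    {v : Fin d → ℝ} (hvint : v ∈ interior K₁) {ρ₁ : ℝ} (hρ₁ : 0 < ρ₁)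
    (hv : T.mulVec v = ρ₁ • v)
    {w : Fin d → ℝ} (hwne : w ≠ 0) {ρ₂ : ℝ} (hρ₂ : 0 < ρ₂)
    (hw : T.mulVec w = ρ₂ • w) : ρ₂ ≤ ρ₁ := by
  obtain ⟨c, hcpos, hnorm⟩ := cone_normality hcl₁ hcone₁ hpt₁
  obtain ⟨δ, hδ, hball⟩ := Metric.mem_nhds_iff.1 (mem_interior_iff_mem_nhds.1 hvint)
  have hvK : v ∈ K₁ := interior_subset hvint
  have hvnorm : 0 ≤ ‖v‖ := norm_nonneg v
  -- the key bound
  have hbound : ∀ u : Fin d → ℝ, ‖u‖ ≤ δ/2 → ∀ n : ℕ,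
      ‖(T ^ n).mulVec u‖ ≤ (2*c + 1) * ρ₁ ^ n * ‖v‖ := by
    intro u hu n
    have hvu₁ : v + u ∈ K₁ := hball (by
      rw [Metric.mem_ball, dist_eq_norm]; simp only [add_sub_cancel_left]; linarith)
    have hvu₂ : v - u ∈ K₁ := hball (by
      rw [Metric.mem_ball, dist_eq_norm]
      have : v - u - v = -u := by ring_nf
      rw [this, norm_neg]; linarith)
    have hp : (T ^ n).mulVec (v + u) ∈ K₁ := pow_mulVec_mem hTK₁ n _ hvu₁
    have hq : (T ^ n).mulVec (v - u) ∈ K₁ := pow_mulVec_mem hTK₁ n _ hvu₂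
    have hpe : (T ^ n).mulVec (v + u) = ρ₁ ^ n • v + (T ^ n).mulVec u := by
      rw [Matrix.mulVec_add, pow_mulVec_eigen hv]
    have hqe : (T ^ n).mulVec (v - u) = ρ₁ ^ n • v - (T ^ n).mulVec u := by
      rw [Matrix.mulVec_sub, pow_mulVec_eigen hv]
    have hsum : (T ^ n).mulVec (v + u) + (T ^ n).mulVec (v - u) = (2 * ρ₁ ^ n) • v := by
      rw [hpe, hqe, two_mul, add_smul]; ring_nf
    have h1 := hnorm _ hp _ hq
    rw [hsum] at h1
    have h2 : ‖(2 * ρ₁ ^ n) • v‖ = 2 * ρ₁ ^ n * ‖v‖ := by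
      rw [norm_smul, Real.norm_eq_abs, abs_of_pos (by positivity)]
    rw [h2, hpe] at h1
    have h3 : ‖(T ^ n).mulVec u‖ ≤ ‖ρ₁ ^ n • v + (T ^ n).mulVec u‖ + ‖ρ₁ ^ n • v‖ := by
      have h := norm_sub_le (ρ₁ ^ n • v + (T ^ n).mulVec u) (ρ₁ ^ n • v)
      simpa using h
    have h4 : ‖ρ₁ ^ n • v‖ = ρ₁ ^ n * ‖v‖ := by
      rw [norm_smul, Real.norm_eq_abs, abs_of_pos (by positivity)]
    rw [h4] at h3
    nlinarith [pow_pos hρ₁ n]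
  -- apply to u built from w
  have hwn : 0 < ‖w‖ := norm_pos_iff.2 hwne
  set u := (δ/2) • (‖w‖⁻¹ • w) with hu
  have hun : ‖u‖ ≤ δ/2 := by
    rw [hu, norm_smul, norm_smul, Real.norm_eq_abs, Real.norm_eq_abs,
      abs_of_pos (half_pos hδ), abs_of_pos (inv_pos.2 hwn), inv_mul_cancel₀ (ne_of_gt hwn),
      mul_one]
  have hgu : ∀ n : ℕ, ‖(T ^ n).mulVec u‖ = (δ/2) * ρ₂ ^ n := by
    intro n
    rw [hu, Matrix.mulVec_smul, Matrix.mulVec_smul, pow_mulVec_eigen hw]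
    simp only [norm_smul, Real.norm_eq_abs]
    rw [abs_of_pos (half_pos hδ), abs_of_pos (inv_pos.2 hwn), abs_of_pos (pow_pos hρ₂ n)]
    field_simp
  -- conclude
  by_contra hlt
  push_neg at hlt
  have hrat : 1 < ρ₂ / ρ₁ := (one_lt_div hρ₁).2 hlt
  obtain ⟨n, hn⟩ := pow_unbounded_of_one_lt ((2*c+1) * ‖v‖ / (δ/2)) hrat
  have hineq := hbound u hun n
  rw [hgu n] at hineq
  have h5 : (ρ₂ / ρ₁) ^ n ≤ (2*c+1) * ‖v‖ / (δ/2) := by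
    rw [div_pow, div_le_div_iff₀ (by positivity) (by positivity)]
    calc ρ₂ ^ n * (δ/2) = (δ/2) * ρ₂ ^ n := by ring
      _ ≤ (2*c+1) * ρ₁ ^ n * ‖v‖ := hineq
      _ = (2*c+1) * ‖v‖ * ρ₁ ^ n := by ring
  linarith

lemma eigenvector_unique (hd : 0 < d)
    (hcl₁ : IsClosed K₁)
    (hcone₁ : ∀ x ∈ K₁, ∀ t : ℝ, 0 ≤ t → t • x ∈ K₁)
    (hpt₁ : K₁ ∩ (-K₁) = {0})
    (hTpos₁ : ∀ x ∈ K₁, x ≠ 0 → T.mulVec x ∈ interior K₁)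
    {v : Fin d → ℝ} (hvint : v ∈ interior K₁) {ρ : ℝ} (hρ : 0 < ρ)
    (hv : T.mulVec v = ρ • v)
    {w : Fin d → ℝ} (hwne : w ≠ 0)
    (hw : T.mulVec w = ρ • w) : ∃ c : ℝ, c ≠ 0 ∧ w = c • v := by
  have hvne : v ≠ 0 := fun h => zero_not_mem_interior hd hpt₁ (h ▸ hvint)
  by_cases hex : ∃ c : ℝ, w = c • v
  · obtain ⟨c, hc⟩ := hex
    refine ⟨c, ?_, hc⟩
    intro h
    rw [h, zero_smul] at hc
    exact hwne hc
  · exfalso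
    push_neg at hex
    -- every point v + t w of K₁ is interior
    have key : ∀ t : ℝ, v + t • w ∈ K₁ → v + t • w ∈ interior K₁ := by
      intro t hx
      set x := v + t • w with hxdef
      have hxne : x ≠ 0 := by
        intro h
        rw [hxdef] at h
        rcases eq_or_ne t 0 with rfl | htne
        · simp at h; exact hvne h
        · have hv0 : v = -(t • w) := eq_neg_of_add_eq_zero_left h
          have hww : (-t⁻¹) • v = w := by
            rw [hv0, smul_neg, neg_smul, neg_neg, smul_smul, inv_mul_cancel₀ htne, one_smul]
          exact hex (-t⁻¹) hww.symm
      have hTx : T.mulVec x = ρ • x := by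
        rw [hxdef, Matrix.mulVec_add, Matrix.mulVec_smul, hv, hw, smul_add, smul_smul,
          smul_smul, mul_comm]
      have h1 : T.mulVec x ∈ interior K₁ := hTpos₁ x hx hxne
      have h2 : ρ⁻¹ • T.mulVec x ∈ interior K₁ := interior_smul_mem hcone₁ h1 (inv_pos.2 hρ)
      rwa [hTx, smul_smul, inv_mul_cancel₀ (ne_of_gt hρ), one_smul] at h2
    set I : Set ℝ := {t | v + t • w ∈ K₁} with hI
    have hcont : Continuous (fun t : ℝ => v + t • w) :=
      continuous_const.add (continuous_id.smul continuous_const)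
    have hIeq : I = (fun t : ℝ => v + t • w) ⁻¹' (interior K₁) := by
      ext t
      exact ⟨fun h => key t h, fun h => (interior_subset : interior K₁ ⊆ K₁) h⟩
    have hIclopen : IsClopen I := by
      constructor
      · exact hcl₁.preimage hcont
      · rw [hIeq]; exact hcont.isOpen_preimage _ isOpen_interior
    have hIuniv : I = Set.univ :=
      hIclopen.eq_univ ⟨0, by simp [hI]; simpa using interior_subset hvint⟩
    -- w ∈ K₁ and -w ∈ K₁
    have hwK : w ∈ K₁ := by
      have hmem : ∀ n : ℕ, ((n:ℝ)+1)⁻¹ • v + w ∈ K₁ := by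
        intro n
        have ht : ((n:ℝ)+1) ∈ I := by rw [hIuniv]; trivial
        have := hcone₁ _ ht (((n:ℝ)+1)⁻¹) (by positivity)
        rwa [smul_add, smul_smul, inv_mul_cancel₀ (by positivity), one_smul] at this
      have htend : Filter.Tendsto (fun n : ℕ => ((n:ℝ)+1)⁻¹ • v + w) Filter.atTop (nhds w) := by
        have h1 : Filter.Tendsto (fun n : ℕ => ((n:ℝ)+1)⁻¹) Filter.atTop (nhds 0) := by
          simpa [one_div] using tendsto_one_div_add_atTop_nhds_zero_nat (𝕜 := ℝ)
        have h2 := h1.smul_const v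
        rw [zero_smul] at h2
        simpa using h2.add_const w
      exact hcl₁.mem_of_tendsto htend (Filter.Eventually.of_forall hmem)
    have hwK' : -w ∈ K₁ := by
      have hmem : ∀ n : ℕ, ((n:ℝ)+1)⁻¹ • v + (-w) ∈ K₁ := by
        intro n
        have ht : (-((n:ℝ)+1)) ∈ I := by rw [hIuniv]; trivial
        have := hcone₁ _ ht (((n:ℝ)+1)⁻¹) (by positivity)
        rw [smul_add, smul_smul] at this
        have heq : (((n:ℝ)+1)⁻¹ * -((n:ℝ)+1)) • w = -w := by
          rw [show ((n:ℝ)+1)⁻¹ * -((n:ℝ)+1) = -1 by field_simp, neg_one_smul]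
        rwa [heq] at this
      have htend : Filter.Tendsto (fun n : ℕ => ((n:ℝ)+1)⁻¹ • v + (-w)) Filter.atTop
          (nhds (-w)) := by
        have h1 : Filter.Tendsto (fun n : ℕ => ((n:ℝ)+1)⁻¹) Filter.atTop (nhds 0) := by
          simpa [one_div] using tendsto_one_div_add_atTop_nhds_zero_nat (𝕜 := ℝ)
        have h2 := h1.smul_const v
        rw [zero_smul] at h2
        simpa using h2.add_const (-w)
      exact hcl₁.mem_of_tendsto htend (Filter.Eventually.of_forall hmem)
    have : w ∈ K₁ ∩ (-K₁) := ⟨hwK, by rwa [Set.mem_neg]⟩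
    rw [hpt₁] at this
    exact hwne this
end Compare

section Assembly
variable {𝒜 : Fin m → Matrix (Fin d) (Fin d) ℝ}

/-- Lemma A : two invariant proper cones of an irreducible family have a nontrivial
intersection (up to a sign). -/
lemma exists_nonzero_common (hd : 0 < d) (hirr : IsIrreducibleFamily 𝒜)
    {K₁ K₂ : Set (Fin d → ℝ)}
    (hK₁ : IsInvariantCone 𝒜 K₁) (hK₂ : IsInvariantCone 𝒜 K₂) :
    ∃ z : Fin d → ℝ, z ≠ 0 ∧ (z ∈ K₁ ∩ K₂ ∨ z ∈ K₁ ∩ (-K₂)) := by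
  obtain ⟨⟨hcl₁, hconv₁, hcone₁, hpt₁, hint₁⟩, hinv₁⟩ := hK₁
  obtain ⟨⟨hcl₂, hconv₂, hcone₂, hpt₂, hint₂⟩, hinv₂⟩ := hK₂
  have h₁ : CCone K₁ := ccone_of hconv₁ hcone₁
  have h₂ : CCone K₂ := ccone_of hconv₂ hcone₂
  have h𝒜 : ∀ i, 𝒜 i ∈ Sgood K₁ K₂ := fun i => ⟨hinv₁ i, hinv₂ i⟩
  have h𝒜' : ∀ i, 𝒜 i ∈ Sgood K₂ K₁ := fun i => ⟨hinv₂ i, hinv₁ i⟩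
  obtain ⟨e₁, he₁⟩ := hint₁
  obtain ⟨e₂, he₂⟩ := hint₂
  have h0₁ : (0 : Fin d → ℝ) ∈ K₁ := zero_mem_of_cone hcone₁ (interior_subset he₁)
  have h0₂ : (0 : Fin d → ℝ) ∈ K₂ := zero_mem_of_cone hcone₂ (interior_subset he₂)
  -- uniformly positive matrices
  obtain ⟨A₁, hA₁S, hA₁⟩ := uniform_positive hirr hcl₁ hconv₁ hcone₁ h₂ h0₁ h0₂ h𝒜
  obtain ⟨A₂', hA₂S', hA₂⟩ := uniform_positive hirr hcl₂ hconv₂ hcone₂ h₁ h0₂ h0₁ h𝒜'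
  have hA₂S : A₂' ∈ Sgood K₁ K₂ := ⟨hA₂S'.2, hA₂S'.1⟩
  set T := A₁ + A₂' with hT
  have hTS : T ∈ Sgood K₁ K₂ := Sgood_add h₁ h₂ hA₁S hA₂S
  have hTpos₁ : ∀ x ∈ K₁, x ≠ 0 → T.mulVec x ∈ interior K₁ := by
    intro x hx hxne
    rw [hT, Matrix.add_mulVec]
    exact interior_add_mem hconv₁ hcone₁ (hA₁ x hx hxne) (hA₂S.1 x hx)
  have hTpos₂ : ∀ x ∈ K₂, x ≠ 0 → T.mulVec x ∈ interior K₂ := by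
    intro x hx hxne
    rw [hT, Matrix.add_mulVec, add_comm]
    exact interior_add_mem hconv₂ hcone₂ (hA₂ x hx hxne) (hA₁S.2 x hx)
  -- eigenvectors
  obtain ⟨ρ₁, hρ₁, v, hvint, hvne, hv⟩ :=
    exists_pos_eigenvector hd hcl₁ hconv₁ hcone₁ hpt₁ ⟨e₁, he₁⟩ hTS.1 hTpos₁
  obtain ⟨ρ₂, hρ₂, w, hwint, hwne, hw⟩ :=
    exists_pos_eigenvector hd hcl₂ hconv₂ hcone₂ hpt₂ ⟨e₂, he₂⟩ hTS.2 hTpos₂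
  -- equal eigenvalues
  have hle₁ : ρ₂ ≤ ρ₁ := eigenvalue_le hcl₁ hcone₁ hpt₁ hTS.1 hvint hρ₁ hv hwne hρ₂ hw
  have hle₂ : ρ₁ ≤ ρ₂ := eigenvalue_le hcl₂ hcone₂ hpt₂ hTS.2 hwint hρ₂ hw hvne hρ₁ hv
  have hρeq : ρ₁ = ρ₂ := le_antisymm hle₂ hle₁
  rw [← hρeq] at hw
  -- simplicity
  obtain ⟨c, hcne, hc⟩ :=
    eigenvector_unique hd hcl₁ hcone₁ hpt₁ hTpos₁ hvint hρ₁ hv hwne hw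
  rcases lt_or_gt_of_ne hcne with hneg | hpos
  · -- c < 0 : v ∈ K₁ ∩ (-K₂)
    refine ⟨v, hvne, Or.inr ⟨interior_subset hvint, ?_⟩⟩
    rw [Set.mem_neg]
    have : (-c)⁻¹ • w ∈ K₂ :=
      hcone₂ w (interior_subset hwint) _ (le_of_lt (inv_pos.2 (neg_pos.2 hneg)))
    rwa [hc, smul_smul, show (-c)⁻¹ * c = -1 by field_simp, neg_one_smul] at this
  · -- c > 0 : v ∈ K₁ ∩ K₂
    refine ⟨v, hvne, Or.inl ⟨interior_subset hvint, ?_⟩⟩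
    have : c⁻¹ • w ∈ K₂ := hcone₂ w (interior_subset hwint) _ (le_of_lt (inv_pos.2 hpos))
    rwa [hc, smul_smul, inv_mul_cancel₀ hcne, one_smul] at this
end Assembly

section Final
variable {𝒜 : Fin m → Matrix (Fin d) (Fin d) ℝ}

lemma zero_mem_invariant {K : Set (Fin d → ℝ)} (hK : IsInvariantCone 𝒜 K) :
    (0 : Fin d → ℝ) ∈ K := by
  obtain ⟨⟨_, _, hcone, _, ⟨e, he⟩⟩, _⟩ := hK
  exact zero_mem_of_cone hcone (interior_subset he)

lemma neg_invariant {K : Set (Fin d → ℝ)} (hK : IsInvariantCone 𝒜 K) :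
    IsInvariantCone 𝒜 (-K) := by
  obtain ⟨⟨hcl, hconv, hcone, hpt, ⟨e, he⟩⟩, hinv⟩ := hK
  refine ⟨⟨hcl.neg, hconv.neg, ?_, ?_, ?_⟩, ?_⟩
  · intro x hx t ht
    rw [Set.mem_neg] at hx ⊢
    rw [← smul_neg]
    exact hcone _ hx t ht
  · rw [neg_neg]
    rw [Set.inter_comm]
    exact hpt
  · refine ⟨-e, ?_⟩
    have : (fun x : Fin d → ℝ => -x) '' interior K ⊆ -K := by
      rintro _ ⟨u, hu, rfl⟩
      rw [Set.mem_neg, neg_neg]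
      exact interior_subset hu
    refine mem_interior.2 ⟨(fun x : Fin d → ℝ => -x) '' interior K, this, ?_, ⟨e, he, rfl⟩⟩
    exact (Homeomorph.neg (Fin d → ℝ)).isOpenMap _ isOpen_interior
  · intro i x hx
    rw [Set.mem_neg] at hx ⊢
    rw [← Matrix.mulVec_neg]
    exact hinv i _ hx

lemma inter_invariant (hirr : IsIrreducibleFamily 𝒜) {K K' : Set (Fin d → ℝ)}
    (hK : IsInvariantCone 𝒜 K) (hK' : IsInvariantCone 𝒜 K')
    (hne : ∃ z, z ≠ 0 ∧ z ∈ K ∩ K') : IsInvariantCone 𝒜 (K ∩ K') := by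
  obtain ⟨⟨hcl, hconv, hcone, hpt, hint⟩, hinv⟩ := hK
  obtain ⟨⟨hcl', hconv', hcone', hpt', hint'⟩, hinv'⟩ := hK'
  obtain ⟨z, hzne, hz⟩ := hne
  have hcone'' : ∀ x ∈ K ∩ K', ∀ t : ℝ, 0 ≤ t → t • x ∈ K ∩ K' :=
    fun x hx t ht => ⟨hcone _ hx.1 t ht, hcone' _ hx.2 t ht⟩
  have hinv'' : ∀ i, ∀ x ∈ K ∩ K', (𝒜 i).mulVec x ∈ K ∩ K' :=
    fun i x hx => ⟨hinv i _ hx.1, hinv' i _ hx.2⟩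
  refine ⟨⟨hcl.inter hcl', hconv.inter hconv', hcone'', ?_, ?_⟩, hinv''⟩
  · apply subset_antisymm
    · intro x ⟨hx1, hx2⟩
      rw [Set.mem_neg] at hx2
      have : x ∈ K ∩ (-K) := ⟨hx1.1, Set.mem_neg.2 hx2.1⟩
      rwa [hpt] at this
    · intro x hx
      rw [Set.mem_singleton_iff] at hx
      subst hx
      have h0 : (0 : Fin d → ℝ) ∈ K ∩ K' :=
        ⟨zero_mem_of_cone hcone (interior_subset hint.some_mem),
         zero_mem_of_cone hcone' (interior_subset hint'.some_mem)⟩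
      exact ⟨h0, by rw [Set.mem_neg, neg_zero]; exact h0⟩
  · exact interior_nonempty_of_invariant hirr (hconv.inter hconv') hcone'' hinv''
      ⟨z, hz, hzne⟩

theorem intersection_dichotomy' (hm : 0 < m)
    (𝒜 : Fin m → Matrix (Fin d) (Fin d) ℝ)
    (hirr : IsIrreducibleFamily 𝒜) (K₁ K₂ : Set (Fin d → ℝ))
    (hK₁ : IsInvariantCone 𝒜 K₁) (hK₂ : IsInvariantCone 𝒜 K₂) :
    (IsProperCone (K₁ ∩ K₂) ∧ K₁ ∩ (-K₂) = {0}) ∨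
    (IsProperCone (K₁ ∩ (-K₂)) ∧ K₁ ∩ K₂ = {0}) := by
  rcases Nat.eq_zero_or_pos d with hd0 | hd
  · -- degenerate case d = 0
    subst hd0
    have hall : ∀ x : Fin 0 → ℝ, x = 0 := fun x => funext (fun i => absurd i.2 (by omega))
    have h0₁ : (0 : Fin 0 → ℝ) ∈ K₁ := zero_mem_invariant hK₁
    have h0₂ : (0 : Fin 0 → ℝ) ∈ K₂ := zero_mem_invariant hK₂
    have he1 : K₁ ∩ K₂ = {0} := by
      apply subset_antisymm
      · intro x _; rw [Set.mem_singleton_iff]; exact hall x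
      · intro x hx; rw [Set.mem_singleton_iff] at hx; subst hx; exact ⟨h0₁, h0₂⟩
    have he2 : K₁ ∩ (-K₂) = {0} := by
      apply subset_antisymm
      · intro x _; rw [Set.mem_singleton_iff]; exact hall x
      · intro x hx; rw [Set.mem_singleton_iff] at hx; subst hx
        exact ⟨h0₁, by rw [Set.mem_neg, neg_zero]; exact h0₂⟩
    left
    refine ⟨?_, he2⟩
    rw [he1]
    refine ⟨isClosed_singleton, convex_singleton 0, ?_, ?_, ?_⟩
    · intro x hx t _; rw [Set.mem_singleton_iff] at hx ⊢; rw [hx, smul_zero]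
    · apply subset_antisymm
      · exact fun x hx => hx.1
      · intro x hx; rw [Set.mem_singleton_iff] at hx; subst hx
        exact ⟨rfl, by rw [Set.mem_neg, neg_zero]; rfl⟩
    · refine ⟨0, ?_⟩
      have huniv : ({0} : Set (Fin 0 → ℝ)) = Set.univ := by
        apply subset_antisymm (fun x _ => trivial)
        intro x _; rw [Set.mem_singleton_iff]; exact hall x
      rw [huniv, interior_univ]; trivial
  · -- main case
    obtain ⟨z, hzne, hz⟩ := exists_nonzero_common hd hirr hK₁ hK₂
    have hpt₁ := hK₁.1.2.2.2.1
    have hpt₂ := hK₂.1.2.2.2.1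
    have h0₁ : (0 : Fin d → ℝ) ∈ K₁ := zero_mem_invariant hK₁
    have h0₂ : (0 : Fin d → ℝ) ∈ K₂ := zero_mem_invariant hK₂
    rcases hz with hz | hz
    · -- z ∈ K₁ ∩ K₂  :  left case
      have hCp : IsInvariantCone 𝒜 (K₁ ∩ K₂) := inter_invariant hirr hK₁ hK₂ ⟨z, hzne, hz⟩
      left
      refine ⟨hCp.1, ?_⟩
      apply subset_antisymm
      · intro x hx
        rw [Set.mem_singleton_iff]
        by_contra hxne
        have hCm : IsInvariantCone 𝒜 (K₁ ∩ (-K₂)) :=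
          inter_invariant hirr hK₁ (neg_invariant hK₂) ⟨x, hxne, hx⟩
        obtain ⟨z', hz'ne, hz'⟩ := exists_nonzero_common hd hirr hCp hCm
        rcases hz' with hz' | hz'
        · have : z' ∈ K₂ ∩ (-K₂) := ⟨hz'.1.2, hz'.2.2⟩
          rw [hpt₂] at this
          exact hz'ne this
        · have h1 : z' ∈ K₁ := hz'.1.1
          have h2 : -z' ∈ K₁ := (Set.mem_neg.1 hz'.2).1
          have : z' ∈ K₁ ∩ (-K₁) := ⟨h1, Set.mem_neg.2 h2⟩
          rw [hpt₁] at this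
          exact hz'ne this
      · intro x hx; rw [Set.mem_singleton_iff] at hx; subst hx
        exact ⟨h0₁, by rw [Set.mem_neg, neg_zero]; exact h0₂⟩
    · -- z ∈ K₁ ∩ (-K₂)  :  right case
      have hCm : IsInvariantCone 𝒜 (K₁ ∩ (-K₂)) :=
        inter_invariant hirr hK₁ (neg_invariant hK₂) ⟨z, hzne, hz⟩
      right
      refine ⟨hCm.1, ?_⟩
      apply subset_antisymm
      · intro x hx
        rw [Set.mem_singleton_iff]
        by_contra hxne
        have hCp : IsInvariantCone 𝒜 (K₁ ∩ K₂) := inter_invariant hirr hK₁ hK₂ ⟨x, hxne, hx⟩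
        obtain ⟨z', hz'ne, hz'⟩ := exists_nonzero_common hd hirr hCp hCm
        rcases hz' with hz' | hz'
        · have : z' ∈ K₂ ∩ (-K₂) := ⟨hz'.1.2, hz'.2.2⟩
          rw [hpt₂] at this
          exact hz'ne this
        · have h1 : z' ∈ K₁ := hz'.1.1
          have h2 : -z' ∈ K₁ := (Set.mem_neg.1 hz'.2).1
          have : z' ∈ K₁ ∩ (-K₁) := ⟨h1, Set.mem_neg.2 h2⟩
          rw [hpt₁] at this
          exact hz'ne this
      · intro x hx; rw [Set.mem_singleton_iff] at hx; subst hx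
        exact ⟨h0₁, h0₂⟩
end Final


end Aux

/-- For two proper invariant cones `K₁, K₂` of an irreducible finite family,
exactly one of `K₁ ∩ K₂` and `K₁ ∩ (-K₂)` is a proper cone, the other is `{0}`. -/
theorem intersection_dichotomy {d m : ℕ} (hm : 0 < m)
    (𝒜 : Fin m → Matrix (Fin d) (Fin d) ℝ)
    (hirr : IsIrreducibleFamily 𝒜) (K₁ K₂ : Set (Fin d → ℝ))
    (hK₁ : IsInvariantCone 𝒜 K₁) (hK₂ : IsInvariantCone 𝒜 K₂) :
    (IsProperCone (K₁ ∩ K₂) ∧ K₁ ∩ (-K₂) = {0}) ∨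
    (IsProperCone (K₁ ∩ (-K₂)) ∧ K₁ ∩ K₂ = {0}) := by
  exact intersection_dichotomy' hm 𝒜 hirr K₁ K₂ hK₁ hK₂
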